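/- Let (K_t) be an IID process over ℕ with marginal probabilities p_k, and suppose Σ_k 1{p_k ≥ p} ≤ C₀ p^{-β} for some β ∈ (0,1), C₀ > 0, and all p > 0. Then ΔV(t) ≤ Γ(1-β)·C₀·t^{β-1} for all t ≥ 1, where V(t) = Σ_k (1-(1-p_k)^t). -/

import Mathlib

open Real MeasureTheory Set

/-- For an IID process with marginal probabilities p_k satisfying the tail bound
Σ_k 1{p_k ≥ p} ≤ C₀ p^{-β}, the increment of the expected vocabulary
V(t) = Σ_k (1-(1-p_k)^t) satisfies ΔV(t) ≤ Γ(1-β) C₀ t^{β-1}. -/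
theorem stmt11 (p : ℕ → ℝ) (hp : ∀ k, 0 ≤ p k) (hps : HasSum p 1)
    (β C₀ : ℝ) (hβ0 : 0 < β) (hβ1 : β < 1) (hC₀ : 0 < C₀)
    (htail : ∀ q : ℝ, 0 < q → ∀ s : Finset ℕ, (∀ k ∈ s, q ≤ p k) →
      (s.card : ℝ) ≤ C₀ * q ^ (-β)) :
    ∀ t : ℕ, 1 ≤ t →
      (∑' k : ℕ, (1 - (1 - p k) ^ (t + 1))) - (∑' k : ℕ, (1 - (1 - p k) ^ t)) ≤
        Real.Gamma (1 - β) * C₀ * (t : ℝ) ^ (β - 1) := by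
  intro t ht
  have hT : (1 : ℝ) ≤ (t : ℝ) := by exact_mod_cast ht
  have hT0 : (0 : ℝ) < (t : ℝ) := by linarith
  have hp1 : ∀ k, p k ≤ 1 := fun k => le_hasSum hps k (fun i _ => hp i)
  have hq0 : ∀ k, 0 ≤ 1 - p k := fun k => by linarith [hp1 k]
  have hq1 : ∀ k, 1 - p k ≤ 1 := fun k => by linarith [hp k]
  -- summability of both series
  have hsum : ∀ n : ℕ, Summable (fun k => 1 - (1 - p k) ^ n) := by
    intro n
    refine Summable.of_nonneg_of_le (fun k => ?_) (fun k => ?_)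
      (hps.summable.mul_left (n : ℝ))
    · have := pow_le_one₀ (hq0 k) (hq1 k) (n := n); linarith
    · have h := one_add_mul_le_pow (a := -p k) (by linarith [hp1 k]) n
      have : 1 - (n : ℝ) * p k ≤ (1 - p k) ^ n := by
        simpa [sub_eq_add_neg, mul_comm] using h
      linarith
  -- rewrite the difference as a single tsum
  have key : (∑' k : ℕ, (1 - (1 - p k) ^ (t + 1))) - (∑' k : ℕ, (1 - (1 - p k) ^ t))
      = ∑' k : ℕ, p k * (1 - p k) ^ t := by
    rw [← Summable.tsum_sub (hsum (t + 1)) (hsum t)]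
    exact tsum_congr fun k => by ring
  rw [key]
  set T : ℝ := (t : ℝ) with hTdef
  -- bound each term by p k * exp(-T * p k)
  have hterm : ∀ k, p k * (1 - p k) ^ t ≤ p k * Real.exp (-(T * p k)) := by
    intro k
    refine mul_le_mul_of_nonneg_left ?_ (hp k)
    have h1 : 1 - p k ≤ Real.exp (-p k) := by
      have := Real.add_one_le_exp (-p k); linarith
    calc (1 - p k) ^ t ≤ (Real.exp (-p k)) ^ t := pow_le_pow_left₀ (hq0 k) h1 t
      _ = Real.exp (-(T * p k)) := by
          rw [← Real.exp_nat_mul]; congr 1; push_cast [hTdef]; ring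
  -- ENNReal setup
  set g : ℝ → ENNReal := fun x => ENNReal.ofReal (Real.exp (-(T * x))) with hg
  have hgmeas : Measurable g := by
    apply ENNReal.measurable_ofReal.comp; fun_prop
  set a : ℕ → ℝ := fun k => p k * (1 - p k) ^ t with ha
  have ha0 : ∀ k, 0 ≤ a k := fun k => mul_nonneg (hp k) (pow_nonneg (hq0 k) t)
  have hasum : Summable a := by
    refine Summable.of_nonneg_of_le ha0 (fun k => ?_) hps.summable
    have h1 : (1 - p k) ^ t ≤ 1 := pow_le_one₀ (hq0 k) (hq1 k)
    calc a k = p k * (1 - p k) ^ t := rfl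
      _ ≤ p k * 1 := mul_le_mul_of_nonneg_left h1 (hp k)
      _ = p k := mul_one _
  have hRHS0 : 0 ≤ Real.Gamma (1 - β) * C₀ * T ^ (β - 1) := by
    have := Real.Gamma_pos_of_pos (show 0 < 1 - β by linarith)
    positivity
  rw [← ENNReal.ofReal_le_ofReal_iff hRHS0]
  rw [ENNReal.ofReal_tsum_of_nonneg ha0 hasum]
  -- step 1: termwise bound by an lintegral
  have step1 : ∀ k, ENNReal.ofReal (a k)
      ≤ ∫⁻ x in Ioi (0:ℝ), (Ioc 0 (p k)).indicator g x := by
    intro k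
    have hsub : Ioc (0:ℝ) (p k) ⊆ Ioi 0 := Ioc_subset_Ioi_self
    rw [lintegral_indicator measurableSet_Ioc, Measure.restrict_restrict measurableSet_Ioc,
      inter_eq_self_of_subset_left hsub]
    have hconst : ENNReal.ofReal (a k)
        ≤ ∫⁻ x in Ioc (0:ℝ) (p k), ENNReal.ofReal (Real.exp (-(T * p k))) := by
      rw [setLIntegral_const, Real.volume_Ioc, sub_zero,
        ← ENNReal.ofReal_mul (Real.exp_nonneg _)]
      exact ENNReal.ofReal_le_ofReal (by rw [mul_comm]; exact hterm k)
    refine hconst.trans (lintegral_mono_ae ?_)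
    filter_upwards [self_mem_ae_restrict measurableSet_Ioc] with x hx
    refine ENNReal.ofReal_le_ofReal (Real.exp_le_exp.mpr ?_)
    have := hx.2
    nlinarith
  -- integrability of the dominating function
  have hintg : IntegrableOn (fun x : ℝ => C₀ * (x ^ (-β) * Real.exp (-(T * x)))) (Ioi 0) := by
    have h := integrableOn_rpow_mul_exp_neg_mul_rpow
      (show (-1 : ℝ) < -β by linarith) zero_lt_one hT0
    have h2 : IntegrableOn (fun x : ℝ => x ^ (-β) * Real.exp (-(T * x))) (Ioi 0) := by
      refine h.congr_fun (fun x hx => ?_) measurableSet_Ioi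
      beta_reduce; rw [Real.rpow_one, neg_mul]
    exact h2.const_mul C₀
  -- the value of the Gamma-type integral
  have hint : ∫ x in Ioi (0:ℝ), x ^ (-β) * Real.exp (-(T * x))
      = (1 / T) ^ (1 - β) * Real.Gamma (1 - β) := by
    have h := Real.integral_rpow_mul_exp_neg_mul_Ioi
      (show (0:ℝ) < 1 - β by linarith) hT0
    rw [show (1:ℝ) - β - 1 = -β by ring] at h
    exact h
  calc ∑' k, ENNReal.ofReal (a k)
      ≤ ∑' k, ∫⁻ x in Ioi (0:ℝ), (Ioc 0 (p k)).indicator g x := ENNReal.tsum_le_tsum step1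
    _ = ∫⁻ x in Ioi (0:ℝ), ∑' k, (Ioc 0 (p k)).indicator g x := by
        rw [← lintegral_tsum]
        intro k
        exact (hgmeas.indicator measurableSet_Ioc).aemeasurable
    _ ≤ ∫⁻ x in Ioi (0:ℝ), ENNReal.ofReal (C₀ * (x ^ (-β) * Real.exp (-(T * x)))) := by
        refine lintegral_mono_ae ?_
        filter_upwards [self_mem_ae_restrict measurableSet_Ioi] with x hx
        have hx0 : (0:ℝ) < x := hx
        have hind : ∀ k, (Ioc 0 (p k)).indicator g x
            = (if x ≤ p k then (1:ENNReal) else 0) * g x := by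
          intro k
          by_cases h : x ≤ p k
          · rw [indicator_of_mem (mem_Ioc.mpr ⟨hx0, h⟩), if_pos h, one_mul]
          · rw [indicator_of_notMem (fun hm => h hm.2), if_neg h, zero_mul]
        simp_rw [hind]
        rw [ENNReal.tsum_mul_right]
        have hcount : (∑' k, (if x ≤ p k then (1:ENNReal) else 0))
            ≤ ENNReal.ofReal (C₀ * x ^ (-β)) := by
          rw [ENNReal.tsum_eq_iSup_sum]
          refine iSup_le fun s => ?_
          classical
          have hcard := htail x hx0 (s.filter (fun k => x ≤ p k))
            (fun k hk => (Finset.mem_filter.mp hk).2)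
          calc ∑ k ∈ s, (if x ≤ p k then (1:ENNReal) else 0)
              = ((s.filter (fun k => x ≤ p k)).card : ENNReal) := by
                rw [Finset.sum_boole]
            _ ≤ ENNReal.ofReal (C₀ * x ^ (-β)) := by
                rw [← ENNReal.ofReal_natCast]
                exact ENNReal.ofReal_le_ofReal hcard
        calc (∑' k, (if x ≤ p k then (1:ENNReal) else 0)) * g x
            ≤ ENNReal.ofReal (C₀ * x ^ (-β)) * g x := mul_le_mul_left hcount _
          _ = ENNReal.ofReal (C₀ * (x ^ (-β) * Real.exp (-(T * x)))) := by
              rw [hg, ← ENNReal.ofReal_mul (by positivity), mul_assoc]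
    _ = ENNReal.ofReal (∫ x in Ioi (0:ℝ), C₀ * (x ^ (-β) * Real.exp (-(T * x)))) := by
        rw [MeasureTheory.ofReal_integral_eq_lintegral_ofReal hintg]
        filter_upwards [self_mem_ae_restrict measurableSet_Ioi] with x hx
        have : (0:ℝ) < x := hx
        positivity
    _ ≤ ENNReal.ofReal (Real.Gamma (1 - β) * C₀ * T ^ (β - 1)) := by
        refine ENNReal.ofReal_le_ofReal (le_of_eq ?_)
        rw [MeasureTheory.integral_const_mul, hint, one_div, ← Real.rpow_neg_one T,
          ← Real.rpow_mul hT0.le, show (-1 : ℝ) * (1 - β) = β - 1 by ring]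
        ring
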